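/- Let (f_n)_{n∈ℕ} be a sequence of nonconstant real-rooted polynomials whose degrees are bounded by a fixed integer N, converging coefficient-wise to a nonzero real-rooted polynomial f. Suppose that the limit δ = lim_{n→∞} min{x ∈ ℝ : f_n(x) = 0} exists. Then f has a real root and δ = min{x ∈ ℝ : f(x) = 0}. -/

import Mathlib

open Filter

/-- A real polynomial is real-rooted if all of its complex roots are real. -/
def RealRooted (p : Polynomial ℝ) : Prop :=
  ∀ z : ℂ, Polynomial.aeval z p = 0 → z.im = 0

open Polynomial in
lemma multiset_prod_le_prod {s : Multiset ℂ} {u v : ℂ → ℝ}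
    (h0 : ∀ z ∈ s, 0 ≤ u z) (huv : ∀ z ∈ s, u z ≤ v z) :
    (s.map u).prod ≤ (s.map v).prod := by
  induction s using Multiset.induction with
  | empty => simp
  | cons a s ih =>
    simp only [Multiset.map_cons, Multiset.prod_cons]
    have hu : ∀ z ∈ s, 0 ≤ u z := fun z hz => h0 z (Multiset.mem_cons_of_mem hz)
    have hprod : 0 ≤ (s.map u).prod := by
      apply Multiset.prod_nonneg
      intro x hx
      obtain ⟨z, hz, rfl⟩ := Multiset.mem_map.mp hx
      exact hu z hz
    have h1 : (s.map u).prod ≤ (s.map v).prod :=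
      ih hu (fun z hz => huv z (Multiset.mem_cons_of_mem hz))
    have ha0 : 0 ≤ u a := h0 a (Multiset.mem_cons_self a s)
    have hav : u a ≤ v a := huv a (Multiset.mem_cons_self a s)
    calc u a * (s.map u).prod ≤ v a * (s.map u).prod := by
          exact mul_le_mul_of_nonneg_right hav hprod
      _ ≤ v a * (s.map v).prod := by
          exact mul_le_mul_of_nonneg_left h1 (le_trans ha0 hav)

open Polynomial in
/-- Key quantitative lemma: if all real roots of a real-rooted polynomial `p`
are `≥ a`, and `t < ρ < a`, then `((a-ρ)/(a-t))^(natDegree p) * |p(t)| ≤ |p(ρ)|`. -/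
lemma key_ineq (p : Polynomial ℝ) (hp : RealRooted p) (a t ρ : ℝ)
    (ht : t < ρ) (hρa : ρ < a) (hroots : ∀ x : ℝ, p.eval x = 0 → a ≤ x) :
    ((a - ρ) / (a - t)) ^ p.natDegree * |p.eval t| ≤ |p.eval ρ| := by
  by_cases hp0 : p = 0
  · simp [hp0]
  set c : ℝ := (a - ρ) / (a - t) with hc
  have hat : 0 < a - t := by linarith
  have hc0 : 0 < c := div_pos (by linarith) hat
  set P : Polynomial ℂ := p.map (algebraMap ℝ ℂ) with hP
  have hPsplits : Splits P := IsAlgClosed.splits P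
  have hPfact := hPsplits.eq_prod_roots
  have hcard : Multiset.card P.roots = P.natDegree := splits_iff_card_roots.mp hPsplits
  have hPdeg : P.natDegree = p.natDegree := natDegree_map_eq_of_injective
    (algebraMap ℝ ℂ).injective p
  -- evaluation of P at real points
  have hevalP : ∀ x : ℝ, P.eval (x : ℂ) = ((p.eval x : ℝ) : ℂ) := by
    intro x
    rw [hP, Polynomial.eval_map]
    exact eval₂_at_apply (algebraMap ℝ ℂ) x
  -- every root of P is a real number ≥ a
  have hroot_re : ∀ z ∈ P.roots, ∃ r : ℝ, z = (r : ℂ) ∧ a ≤ r := by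
    intro z hz
    have hz0 : P.eval z = 0 := by
      have := Polynomial.isRoot_of_mem_roots hz
      exact this
    have haeval : Polynomial.aeval z p = 0 := by
      rw [Polynomial.aeval_def, ← Polynomial.eval_map]; exact hz0
    have him : z.im = 0 := hp z haeval
    have hzre : z = (z.re : ℂ) := by
      apply Complex.ext <;> simp [him]
    have hre0 : p.eval z.re = 0 := by
      have : ((p.eval z.re : ℝ) : ℂ) = 0 := by rw [← hevalP, ← hzre]; exact hz0
      exact_mod_cast this
    exact ⟨z.re, hzre, hroots z.re hre0⟩
  -- abs of evaluation via product over roots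
  have habs : ∀ x : ℝ, |p.eval x| =
      ‖P.leadingCoeff‖ * (P.roots.map (fun z => ‖(x : ℂ) - z‖)).prod := by
    intro x
    have h1 : ((p.eval x : ℝ) : ℂ) = P.eval (x : ℂ) := (hevalP x).symm
    have : |p.eval x| = ‖P.eval (x : ℂ)‖ := by
      rw [← h1, Complex.norm_real, Real.norm_eq_abs]
    rw [this]
    conv_lhs => rw [hPfact]
    rw [Polynomial.eval_mul, norm_mul, Polynomial.eval_C]
    congr 1
    rw [Polynomial.eval_multiset_prod, show ∀ m : Multiset ℂ, ‖m.prod‖ = (m.map (‖·‖)).prod from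
      fun m => map_multiset_prod (normHom : ℂ →*₀ ℝ) m, Multiset.map_map, Multiset.map_map]
    congr 1
    ext z
    simp
  rw [habs t, habs ρ]
  rw [← mul_assoc, mul_comm (c ^ p.natDegree) (‖P.leadingCoeff‖), mul_assoc]
  apply mul_le_mul_of_nonneg_left _ (norm_nonneg _)
  -- main multiset inequality
  have hrw : c ^ p.natDegree * (P.roots.map (fun z => ‖(t : ℂ) - z‖)).prod =
      (P.roots.map (fun z => c * ‖(t : ℂ) - z‖)).prod := by
    rw [Multiset.prod_map_mul]
    congr 1
    rw [Multiset.map_const', Multiset.prod_replicate, hcard, hPdeg]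
  rw [hrw]
  apply multiset_prod_le_prod
  · intro z hz
    positivity
  · intro z hz
    obtain ⟨r, rfl, hra⟩ := hroot_re z hz
    have h1 : ‖(t : ℂ) - (r : ℂ)‖ = r - t := by
      rw [← Complex.ofReal_sub, Complex.norm_real, Real.norm_eq_abs, abs_of_nonpos (by linarith)]
      ring
    have h2 : ‖(ρ : ℂ) - (r : ℂ)‖ = r - ρ := by
      rw [← Complex.ofReal_sub, Complex.norm_real, Real.norm_eq_abs, abs_of_nonpos (by linarith)]
      ring
    rw [h1, h2, hc, div_mul_eq_mul_div, div_le_iff₀ hat]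
    nlinarith [hra]

/-- If a sequence of nonconstant real-rooted polynomials of
bounded degree converges coefficient-wise to a nonzero real-rooted polynomial
`g`, and the smallest real roots converge to `δ`, then `g` has a real root and
`δ` is the smallest real root of `g`. -/
theorem statement5 (N : ℕ) (f : ℕ → Polynomial ℝ) (g : Polynomial ℝ) (δ : ℝ)
    (hdeg : ∀ n, (f n).degree ≤ N)
    (hnc : ∀ n, 0 < (f n).natDegree)
    (hrr : ∀ n, RealRooted (f n))
    (hg0 : g ≠ 0) (hgrr : RealRooted g)
    (hconv : ∀ k : ℕ, Tendsto (fun n => (f n).coeff k) atTop (nhds (g.coeff k)))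
    (hlim : Tendsto (fun n => sInf {x : ℝ | (f n).eval x = 0}) atTop (nhds δ)) :
    (∃ x : ℝ, g.eval x = 0) ∧ δ = sInf {x : ℝ | g.eval x = 0} := by
  classical
  set S : ℕ → Set ℝ := fun n => {x : ℝ | (f n).eval x = 0} with hS
  have hfne : ∀ n, f n ≠ 0 := by
    intro n h
    have := hnc n
    rw [h] at this
    simp at this
  have hdN : ∀ n, (f n).natDegree ≤ N := fun n =>
    Polynomial.natDegree_le_iff_degree_le.2 (hdeg n)
  have hgN : g.natDegree ≤ N := by
    rw [Polynomial.natDegree_le_iff_coeff_eq_zero]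
    intro m hm
    have h0 : (fun n => (f n).coeff m) = fun _ => (0 : ℝ) := by
      funext n
      exact Polynomial.coeff_eq_zero_of_natDegree_lt (lt_of_le_of_lt (hdN n) hm)
    have := hconv m
    rw [h0] at this
    exact tendsto_nhds_unique this tendsto_const_nhds
  -- pointwise (moving point) convergence
  have hptwise : ∀ (x : ℕ → ℝ) (x0 : ℝ), Tendsto x atTop (nhds x0) →
      Tendsto (fun n => (f n).eval (x n)) atTop (nhds (g.eval x0)) := by
    intro x x0 hx
    have h1 : (fun n => (f n).eval (x n)) =
        fun n => ∑ k ∈ Finset.range (N + 1), (f n).coeff k * (x n) ^ k := by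
      funext n
      exact Polynomial.eval_eq_sum_range' (lt_of_le_of_lt (hdN n) (Nat.lt_succ_self N)) _
    have h2 : g.eval x0 = ∑ k ∈ Finset.range (N + 1), g.coeff k * x0 ^ k :=
      Polynomial.eval_eq_sum_range' (lt_of_le_of_lt hgN (Nat.lt_succ_self N)) _
    rw [h1, h2]
    exact tendsto_finset_sum _ fun k _ => (hconv k).mul (hx.pow k)
  -- the root sets are nonempty and finite
  have hSne : ∀ n, (S n).Nonempty := by
    intro n
    have hdegpos : 0 < ((f n).map (algebraMap ℝ ℂ)).degree := by
      rw [Polynomial.degree_map_eq_of_injective (algebraMap ℝ ℂ).injective]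
      exact Polynomial.natDegree_pos_iff_degree_pos.mp (hnc n)
    obtain ⟨z, hz⟩ := Complex.exists_root hdegpos
    have haeval : Polynomial.aeval z (f n) = 0 := by
      rw [Polynomial.aeval_def, ← Polynomial.eval_map]; exact hz
    have him : z.im = 0 := hrr n z haeval
    have hzre : z = (z.re : ℂ) := by apply Complex.ext <;> simp [him]
    refine ⟨z.re, ?_⟩
    have h : Polynomial.eval ((z.re : ℝ) : ℂ) ((f n).map (algebraMap ℝ ℂ)) =
        (((f n).eval z.re : ℝ) : ℂ) := by
      rw [Polynomial.eval_map]
      exact Polynomial.eval₂_at_apply (algebraMap ℝ ℂ) z.re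
    have : (((f n).eval z.re : ℝ) : ℂ) = 0 := by
      rw [← h, ← hzre]
      exact hz
    exact_mod_cast this
  have hSfin : ∀ n, (S n).Finite := fun n => Polynomial.finite_setOf_isRoot (hfne n)
  have hroot : ∀ n, (f n).eval (sInf (S n)) = 0 := fun n =>
    (hSne n).csInf_mem (hSfin n)
  -- g(δ) = 0
  have hgδ : g.eval δ = 0 := by
    have h1 := hptwise (fun n => sInf (S n)) δ hlim
    have h2 : (fun n => (f n).eval (sInf (S n))) = fun _ => (0 : ℝ) := by
      funext n; exact hroot n
    rw [h2] at h1
    exact tendsto_nhds_unique h1 tendsto_const_nhds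
  -- every root of g is ≥ δ
  have hmin : ∀ ρ : ℝ, g.eval ρ = 0 → δ ≤ ρ := by
    intro ρ hρ
    by_contra hlt
    push_neg at hlt
    set a : ℝ := (ρ + δ) / 2 with ha
    have hρa : ρ < a := by rw [ha]; linarith
    have haδ : a < δ := by rw [ha]; linarith
    -- choose t < ρ with g(t) ≠ 0
    have hgroots : {x : ℝ | g.eval x = 0}.Finite := Polynomial.finite_setOf_isRoot hg0
    obtain ⟨m, hm⟩ : ∃ m : ℝ, ∀ x ∈ {x : ℝ | g.eval x = 0}, m ≤ x := by
      obtain ⟨m, hm⟩ := (hgroots.bddBelow)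
      exact ⟨m, hm⟩
    set t : ℝ := min ρ m - 1 with htdef
    have htρ : t < ρ := by
      have : t ≤ ρ - 1 := by
        rw [htdef]; have := min_le_left ρ m; linarith
      linarith
    have hgt : g.eval t ≠ 0 := by
      intro h
      have := hm t h
      have h2 : t < m := by
        rw [htdef]; have := min_le_right ρ m; linarith
      linarith
    set c : ℝ := (a - ρ) / (a - t) with hc
    have hat : 0 < a - t := by linarith
    have hc0 : 0 < c := div_pos (by linarith) hat
    have hc1 : c ≤ 1 := by
      rw [hc, div_le_one hat]; linarith
    -- eventually all roots of f n are ≥ a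
    have hev : ∀ᶠ n in atTop, a < sInf (S n) := hlim.eventually (eventually_gt_nhds haδ)
    have hineq : ∀ᶠ n in atTop,
        c ^ N * |(f n).eval t| ≤ |(f n).eval ρ| := by
      filter_upwards [hev] with n hn
      have hroots_a : ∀ x : ℝ, (f n).eval x = 0 → a ≤ x := by
        intro x hx
        have hxS : x ∈ S n := hx
        have : sInf (S n) ≤ x := csInf_le ((hSfin n).bddBelow) hxS
        linarith
      have hk := key_ineq (f n) (hrr n) a t ρ htρ hρa hroots_a
      have hcN : c ^ N ≤ c ^ (f n).natDegree :=
        pow_le_pow_of_le_one hc0.le hc1 (hdN n)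
      calc c ^ N * |(f n).eval t| ≤ c ^ (f n).natDegree * |(f n).eval t| :=
            mul_le_mul_of_nonneg_right hcN (abs_nonneg _)
        _ ≤ |(f n).eval ρ| := hk
    -- pass to the limit
    have hlt1 : Tendsto (fun n => c ^ N * |(f n).eval t|) atTop
        (nhds (c ^ N * |g.eval t|)) := by
      exact (tendsto_const_nhds.mul ((hptwise (fun _ => t) t tendsto_const_nhds).abs))
    have hlt2 : Tendsto (fun n => |(f n).eval ρ|) atTop (nhds |g.eval ρ|) :=
      (hptwise (fun _ => ρ) ρ tendsto_const_nhds).abs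
    have hfinal : c ^ N * |g.eval t| ≤ |g.eval ρ| :=
      le_of_tendsto_of_tendsto hlt1 hlt2 hineq
    rw [hρ] at hfinal
    simp only [abs_zero] at hfinal
    have : 0 < c ^ N * |g.eval t| := by positivity
    linarith
  constructor
  · exact ⟨δ, hgδ⟩
  · apply le_antisymm
    · exact le_csInf ⟨δ, hgδ⟩ (fun x hx => hmin x hx)
    · exact csInf_le ⟨δ, fun x hx => hmin x hx⟩ hgδ
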